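/- For g, h in a Banach algebra A, the element e^{g+h}e^{-g}e^{-h} − 1 lies in the closure of the ideal generated by the products g², gh, hg, h²; more precisely, e^{g+h}e^{-g}e^{-h} − 1 can be written as a sum of four terms, each a product of one of g², gh, hg, h² with an element of the unitization A⁺. -/

import Mathlib

open NormedSpace

noncomputable def expRest {A : Type*} [NormedRing A] [NormedAlgebra ℂ A] (x : A) : A :=
  ∑' n : ℕ, ((n + 2).factorial : ℂ)⁻¹ • x ^ n

lemma exp_expand {A : Type*} [NormedRing A] [NormedAlgebra ℂ A] [CompleteSpace A] (x : A) :
    NormedSpace.exp x = 1 + x + x * x * expRest x := by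
  have hs : Summable (fun n : ℕ => (n.factorial : ℂ)⁻¹ • x ^ n) := expSeries_summable' x
  have hg : Summable (fun n : ℕ => ((n + 2).factorial : ℂ)⁻¹ • x ^ n) := by
    apply Summable.of_norm_bounded ((Real.summable_pow_div_factorial ‖x‖).mul_left (max ‖(1:A)‖ 1))
    intro n
    rw [norm_smul]
    have h1 : ‖((n + 2).factorial : ℂ)⁻¹‖ ≤ (n.factorial : ℝ)⁻¹ := by
      rw [norm_inv, Complex.norm_natCast]
      apply inv_anti₀ (by positivity)
      exact_mod_cast Nat.factorial_le (by omega)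
    have h2 : ‖x ^ n‖ ≤ max ‖(1:A)‖ 1 * ‖x‖ ^ n := by
      cases n with
      | zero => simp [le_max_left]
      | succ m =>
        calc ‖x ^ (m + 1)‖ ≤ ‖x‖ ^ (m + 1) := norm_pow_le' x m.succ_pos
          _ ≤ max ‖(1:A)‖ 1 * ‖x‖ ^ (m + 1) := by
              nlinarith [le_max_right ‖(1:A)‖ 1, pow_nonneg (norm_nonneg x) (m+1)]
    calc ‖((n + 2).factorial : ℂ)⁻¹‖ * ‖x ^ n‖
        ≤ (n.factorial : ℝ)⁻¹ * (max ‖(1:A)‖ 1 * ‖x‖ ^ n) :=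
          mul_le_mul h1 h2 (norm_nonneg _) (by positivity)
      _ = max ‖(1:A)‖ 1 * (‖x‖ ^ n / n.factorial) := by ring
  have key := Summable.sum_add_tsum_nat_add 2 hs
  rw [exp_eq_tsum ℂ]
  show (∑' n : ℕ, (n.factorial : ℂ)⁻¹ • x ^ n) = _
  rw [← key]
  congr 1
  · simp [Finset.sum_range_succ, Nat.factorial]
  · rw [expRest, ← hg.tsum_mul_left (x * x)]
    congr 1
    ext n
    rw [mul_smul_comm]
    congr 1
    rw [add_comm n 2, pow_add, sq]

theorem exp_commutator_defect_in_square_ideal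
    {A : Type*} [NormedRing A] [NormedAlgebra ℂ A] [CompleteSpace A]
    (g h : A) :
    ∃ c₁ c₂ c₃ c₄ : A,
      NormedSpace.exp (g + h) * NormedSpace.exp (-g) * NormedSpace.exp (-h) - 1 =
        g * g * c₁ + g * h * c₂ + h * g * c₃ + h * h * c₄ := by
  set a := expRest (g + h) with ha
  set b := expRest (-g) with hb
  set c := expRest (-h) with hc
  have e1 : NormedSpace.exp (g + h) = 1 + (g + h) + (g + h) * (g + h) * a := exp_expand _
  have e2 : NormedSpace.exp (-g) = 1 - g + g * g * b := by
    rw [exp_expand (-g)]; noncomm_ring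
  have e3 : NormedSpace.exp (-h) = 1 - h + h * h * c := by
    rw [exp_expand (-h)]; noncomm_ring
  set u := 1 - g + g * g * b with hu
  set v := 1 - h + h * h * c with hv
  refine ⟨(b - 1 + g * b + a * u) * v, (a * u) * v, (-1 + g * b + a * u) * v,
    (a * u) * v + (c - 1 + h * c), ?_⟩
  rw [e1, e2, e3, hu, hv]
  noncomm_ring
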